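/- Two binary unbiased qubit POVMs A_± = (1/2)(I ± v·σ) and B_± = (1/2)(I ± w·σ) with ‖v‖, ‖w‖ ≤ 1 are jointly measurable if and only if ‖v + w‖ + ‖v − w‖ ≤ 2 (Busch's criterion). -/

import Mathlib

open Matrix ComplexOrder

/-- The Pauli matrices σ_x, σ_y, σ_z. -/
noncomputable def pauli : Fin 3 → Matrix (Fin 2) (Fin 2) ℂ
  | 0 => !![0, 1; 1, 0]
  | 1 => !![0, -Complex.I; Complex.I, 0]
  | 2 => !![1, 0; 0, -1]

/-- `v · σ` for a real vector `v ∈ ℝ³`. -/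
noncomputable def blochOp (v : Fin 3 → ℝ) : Matrix (Fin 2) (Fin 2) ℂ :=
  ∑ k, (v k : ℂ) • pauli k

/-- Euclidean inner product on ℝ³. -/
def dot3 (v w : Fin 3 → ℝ) : ℝ := ∑ k, v k * w k

/-- Euclidean norm on ℝ³. -/
noncomputable def norm3 (v : Fin 3 → ℝ) : ℝ := Real.sqrt (dot3 v v)

noncomputable def Jmat (a : ℝ) (m : Fin 3 → ℝ) : Matrix (Fin 2) (Fin 2) ℂ :=
  !![(a + m 2 : ℂ), (m 0 : ℂ) - (m 1 : ℂ) * Complex.I;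
     (m 0 : ℂ) + (m 1 : ℂ) * Complex.I, ((a : ℂ) - m 2)]

lemma smul_one_add_blochOp (a : ℝ) (m : Fin 3 → ℝ) :
    (a : ℂ) • (1 : Matrix (Fin 2) (Fin 2) ℂ) + blochOp m = Jmat a m := by
  unfold blochOp Jmat
  ext i j
  fin_cases i <;> fin_cases j <;>
    simp [Fin.sum_univ_three, pauli, Matrix.one_apply] <;> ring

lemma norm3_eq_norm (v : Fin 3 → ℝ) :
    norm3 v = ‖(WithLp.equiv 2 (Fin 3 → ℝ)).symm v‖ := by
  rw [EuclideanSpace.norm_eq]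
  unfold norm3 dot3
  congr 1
  refine Finset.sum_congr rfl fun k _ => ?_
  simp [Real.norm_eq_abs, sq, abs_mul_abs_self]

lemma norm3_nonneg (v : Fin 3 → ℝ) : 0 ≤ norm3 v := Real.sqrt_nonneg _

lemma sq_norm3 (v : Fin 3 → ℝ) : norm3 v ^ 2 = v 0 ^ 2 + v 1 ^ 2 + v 2 ^ 2 := by
  unfold norm3
  rw [Real.sq_sqrt]
  · unfold dot3; rw [Fin.sum_univ_three]; ring
  · unfold dot3; rw [Fin.sum_univ_three]
    nlinarith [sq_nonneg (v 0), sq_nonneg (v 1), sq_nonneg (v 2)]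

set_option maxHeartbeats 1000000 in
lemma quad_nonneg (a m0 m1 m2 c1 c2 d1 d2 : ℝ) (ha : 0 ≤ a) (hsq : m0^2+m1^2+m2^2 ≤ a^2) :
    0 ≤ a*(c1^2+c2^2+d1^2+d2^2) + m2*(c1^2+c2^2-d1^2-d2^2)
      + 2*m0*(c1*d1+c2*d2) + 2*m1*(c1*d2-c2*d1) := by
  have hcs : (m2*((c1^2+c2^2)-(d1^2+d2^2)) + 2*m0*(c1*d1+c2*d2) + 2*m1*(c1*d2-c2*d1))^2
      ≤ (m0^2+m1^2+m2^2) * (((c1^2+c2^2)+(d1^2+d2^2))^2) := by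
    nlinarith [sq_nonneg (m2*(2*(c1*d1+c2*d2)) - m0*((c1^2+c2^2)-(d1^2+d2^2))),
      sq_nonneg (m2*(2*(c1*d2-c2*d1)) - m1*((c1^2+c2^2)-(d1^2+d2^2))),
      sq_nonneg (m0*(2*(c1*d2-c2*d1)) - m1*(2*(c1*d1+c2*d2)))]
  have hc2 : (m2*((c1^2+c2^2)-(d1^2+d2^2)) + 2*m0*(c1*d1+c2*d2) + 2*m1*(c1*d2-c2*d1))^2
      ≤ (a*((c1^2+c2^2)+(d1^2+d2^2)))^2 := by
    nlinarith [hcs, sq_nonneg ((c1^2+c2^2)+(d1^2+d2^2))]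
  have hb : 0 ≤ a*((c1^2+c2^2)+(d1^2+d2^2)) := by positivity
  have h3 : -(a*((c1^2+c2^2)+(d1^2+d2^2)))
      ≤ m2*((c1^2+c2^2)-(d1^2+d2^2)) + 2*m0*(c1*d1+c2*d2) + 2*m1*(c1*d2-c2*d1) := by
    nlinarith [hc2, hb]
  linarith [h3]

lemma jmat_posSemidef {a : ℝ} {m : Fin 3 → ℝ} (h : norm3 m ≤ a) : (Jmat a m).PosSemidef := by
  have ha : 0 ≤ a := le_trans (norm3_nonneg m) h
  have hsq : m 0 ^ 2 + m 1 ^ 2 + m 2 ^ 2 ≤ a ^ 2 := by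
    rw [← sq_norm3]
    exact pow_le_pow_left₀ (norm3_nonneg m) h 2
  refine Matrix.posSemidef_iff_dotProduct_mulVec.mpr ⟨?_, ?_⟩
  · ext i j
    fin_cases i <;> fin_cases j <;>
      simp [Jmat, Matrix.conjTranspose_apply, Complex.ext_iff]
  · intro x
    have hQ : star x ⬝ᵥ (Jmat a m) *ᵥ x =
        ((a + m 2 : ℂ)) * (star (x 0) * x 0) + ((m 0 : ℂ) - (m 1 : ℂ) * Complex.I) * (star (x 0) * x 1)
        + ((m 0 : ℂ) + (m 1 : ℂ) * Complex.I) * (star (x 1) * x 0) + ((a : ℂ) - m 2) * (star (x 1) * x 1) := by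
      simp [Matrix.mulVec, dotProduct, Fin.sum_univ_two, Jmat]
      ring
    rw [hQ, Complex.le_def]
    set c1 := (x 0).re; set c2 := (x 0).im; set d1 := (x 1).re; set d2 := (x 1).im
    constructor
    · simp only [Complex.add_re, Complex.mul_re, Complex.mul_im, Complex.sub_re, Complex.sub_im,
        Complex.add_im, Complex.ofReal_re, Complex.ofReal_im, Complex.I_re, Complex.I_im,
        Complex.zero_re, Complex.zero_im, RCLike.star_def, Complex.conj_re, Complex.conj_im]
      have := quad_nonneg a (m 0) (m 1) (m 2) (x 0).re (x 0).im (x 1).re (x 1).im ha hsq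
      linarith [this]
    · simp only [Complex.add_im, Complex.mul_re, Complex.mul_im, Complex.sub_re, Complex.sub_im,
        Complex.add_re, Complex.ofReal_re, Complex.ofReal_im, Complex.I_re, Complex.I_im,
        Complex.zero_re, Complex.zero_im, RCLike.star_def, Complex.conj_re, Complex.conj_im]
      ring

lemma psd_det_nonneg {P : Matrix (Fin 2) (Fin 2) ℂ} (hP : P.PosSemidef) : 0 ≤ P.det := by
  rw [hP.1.det_eq_prod_eigenvalues, ← RCLike.ofReal_prod]
  exact RCLike.ofReal_nonneg.mpr
    (Finset.prod_nonneg fun i _ => hP.eigenvalues_nonneg i)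

lemma psd_diag_nonneg {P : Matrix (Fin 2) (Fin 2) ℂ} (hP : P.PosSemidef) (i : Fin 2) :
    0 ≤ P i i := by
  have := hP.dotProduct_mulVec_nonneg (Pi.single i 1)
  simpa [dotProduct, Matrix.mulVec, Pi.single_apply, Fin.sum_univ_two] using this

lemma psd_decomp {P : Matrix (Fin 2) (Fin 2) ℂ} (hP : P.PosSemidef) :
    ∃ a : ℝ, ∃ m : Fin 3 → ℝ, norm3 m ≤ a ∧ P = Jmat a m := by
  have h00 := psd_diag_nonneg hP 0
  have h11 := psd_diag_nonneg hP 1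
  rw [Complex.le_def] at h00 h11
  obtain ⟨h00re, h00im⟩ := h00
  obtain ⟨h11re, h11im⟩ := h11
  simp only [Complex.zero_re, Complex.zero_im] at h00re h00im h11re h11im
  replace h00im := h00im.symm
  replace h11im := h11im.symm
  have herm : P 1 0 = starRingEnd ℂ (P 0 1) := by
    have := hP.1
    rw [Matrix.IsHermitian] at this
    have h := congr_fun (congr_fun this 1) 0
    simpa [Matrix.conjTranspose_apply] using h.symm
  have hdet := psd_det_nonneg hP
  rw [Matrix.det_fin_two, Complex.le_def] at hdet
  obtain ⟨hdetre, -⟩ := hdet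
  rw [herm] at hdetre
  simp only [Complex.zero_re, Complex.sub_re, Complex.mul_re, Complex.conj_re, Complex.conj_im,
    h00im, h11im] at hdetre
  set a := ((P 0 0).re + (P 1 1).re) / 2 with ha
  set m : Fin 3 → ℝ := ![(P 0 1).re, -(P 0 1).im, ((P 0 0).re - (P 1 1).re) / 2] with hm
  have ha0 : 0 ≤ a := by rw [ha]; linarith
  refine ⟨a, m, ?_, ?_⟩
  · have hsq : dot3 m m ≤ a ^ 2 := by
      unfold dot3
      rw [Fin.sum_univ_three, hm, ha]
      simp only [Matrix.cons_val_zero, Matrix.cons_val_one, Matrix.head_cons,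
        Matrix.cons_val_two, Matrix.tail_cons]
      nlinarith [hdetre]
    calc norm3 m = Real.sqrt (dot3 m m) := rfl
      _ ≤ Real.sqrt (a ^ 2) := Real.sqrt_le_sqrt hsq
      _ = a := by rw [Real.sqrt_sq ha0]
  · ext i j
    fin_cases i <;> fin_cases j <;> apply Complex.ext <;>
      simp [Jmat, hm, ha, herm, h00im, h11im] <;> ring

lemma Jmat_congr {a a' : ℝ} {m m' : Fin 3 → ℝ} (h1 : a = a') (h2 : ∀ k, m k = m' k) :
    Jmat a m = Jmat a' m' := by
  have hm : m = m' := funext h2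
  rw [h1, hm]

lemma Jmat_add (a a' : ℝ) (m m' : Fin 3 → ℝ) :
    Jmat a m + Jmat a' m' = Jmat (a + a') (m + m') := by
  ext i j
  fin_cases i <;> fin_cases j <;> simp [Jmat] <;> push_cast <;> ring

lemma Jmat_inj {a a' : ℝ} {m m' : Fin 3 → ℝ} (h : Jmat a m = Jmat a' m') :
    a = a' ∧ ∀ k, m k = m' k := by
  have e00 := congrArg Complex.re (congr_fun (congr_fun h 0) 0)
  have e11 := congrArg Complex.re (congr_fun (congr_fun h 1) 1)
  have e01re := congrArg Complex.re (congr_fun (congr_fun h 0) 1)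
  have e01im := congrArg Complex.im (congr_fun (congr_fun h 0) 1)
  simp [Jmat] at e00 e11 e01re e01im
  refine ⟨by linarith, fun k => ?_⟩
  fin_cases k <;> simp only [Fin.isValue, Fin.mk_one] <;> first
    | exact e01re
    | (show m 1 = m' 1; linarith)
    | (show m 2 = m' 2; linarith)

lemma blochOp_smul (c : ℝ) (u : Fin 3 → ℝ) : blochOp (c • u) = (c : ℂ) • blochOp u := by
  unfold blochOp
  rw [Finset.smul_sum]
  refine Finset.sum_congr rfl fun k _ => ?_
  rw [smul_smul, Pi.smul_apply, smul_eq_mul]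
  push_cast
  ring_nf

lemma A_eq (u : Fin 3 → ℝ) (x : Fin 2) :
    (1 / 2 : ℂ) • (1 + ((-1 : ℂ)) ^ (x : ℕ) • blochOp u)
      = Jmat (1/2) ((((-1:ℝ)) ^ (x : ℕ) / 2) • u) := by
  rw [← smul_one_add_blochOp, blochOp_smul, smul_add, smul_smul]
  congr 1
  · norm_num
  · congr 1
    push_cast
    ring

lemma norm3_smul (c : ℝ) (u : Fin 3 → ℝ) : norm3 (c • u) = |c| * norm3 u := by
  rw [norm3_eq_norm, norm3_eq_norm]
  have h : (WithLp.equiv 2 (Fin 3 → ℝ)).symm (c • u)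
      = c • (WithLp.equiv 2 (Fin 3 → ℝ)).symm u := rfl
  rw [h, norm_smul, Real.norm_eq_abs]

lemma norm3_add_le (x y : Fin 3 → ℝ) : norm3 (x + y) ≤ norm3 x + norm3 y := by
  rw [norm3_eq_norm, norm3_eq_norm, norm3_eq_norm]
  have h : (WithLp.equiv 2 (Fin 3 → ℝ)).symm (x + y)
      = (WithLp.equiv 2 (Fin 3 → ℝ)).symm x + (WithLp.equiv 2 (Fin 3 → ℝ)).symm y := rfl
  rw [h]
  exact norm_add_le _ _

/-- Busch's criterion: two binary unbiased qubit POVMs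
`A_± = (1/2)(I ± v·σ)`, `B_± = (1/2)(I ± w·σ)` are jointly measurable iff
`‖v + w‖ + ‖v − w‖ ≤ 2`. -/
theorem busch_joint_measurability (v w : Fin 3 → ℝ)
    (hv : norm3 v ≤ 1) (hw : norm3 w ≤ 1)
    (A B : Fin 2 → Matrix (Fin 2) (Fin 2) ℂ)
    (hA : ∀ x : Fin 2, A x = (1 / 2 : ℂ) • (1 + ((-1 : ℂ)) ^ (x : ℕ) • blochOp v))
    (hB : ∀ x : Fin 2, B x = (1 / 2 : ℂ) • (1 + ((-1 : ℂ)) ^ (x : ℕ) • blochOp w)) :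
    (∃ J : Fin 2 → Fin 2 → Matrix (Fin 2) (Fin 2) ℂ,
        (∀ i f, (J i f).PosSemidef) ∧
        (∀ i, ∑ f, J i f = A i) ∧ (∀ f, ∑ i, J i f = B f)) ↔
      norm3 (v + w) + norm3 (v - w) ≤ 2 := by
  constructor
  · rintro ⟨J, hpsd, hmA, hmB⟩
    choose α μ hle hJ using fun i f => psd_decomp (hpsd i f)
    have keyA : ∀ i : Fin 2, α i 0 + α i 1 = 1/2 ∧
        ∀ k, μ i 0 k + μ i 1 k = (-1:ℝ)^(i:ℕ)/2 * v k := by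
      intro i
      have h := hmA i
      rw [hA i, A_eq, Fin.sum_univ_two, hJ i 0, hJ i 1, Jmat_add] at h
      obtain ⟨h1, h2⟩ := Jmat_inj h
      exact ⟨h1, fun k => by have := h2 k; simpa [Pi.add_apply] using this⟩
    have keyB : ∀ f : Fin 2, α 0 f + α 1 f = 1/2 ∧
        ∀ k, μ 0 f k + μ 1 f k = (-1:ℝ)^(f:ℕ)/2 * w k := by
      intro f
      have h := hmB f
      rw [hB f, A_eq, Fin.sum_univ_two, hJ 0 f, hJ 1 f, Jmat_add] at h
      obtain ⟨h1, h2⟩ := Jmat_inj h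
      exact ⟨h1, fun k => by have := h2 k; simpa [Pi.add_apply] using this⟩
    have hvw : v + w = (2:ℝ) • μ 0 0 + (-2:ℝ) • μ 1 1 := by
      funext k
      have h1 := (keyA 0).2 k
      have h2 := (keyB 1).2 k
      simp only [Fin.val_zero, Fin.val_one, pow_zero, pow_one] at h1 h2
      simp only [Pi.add_apply, Pi.smul_apply, smul_eq_mul]
      linarith
    have hvmw : v - w = (2:ℝ) • μ 0 1 + (-2:ℝ) • μ 1 0 := by
      funext k
      have h1 := (keyA 0).2 k
      have h2 := (keyB 0).2 k
      simp only [Fin.val_zero, Fin.val_one, pow_zero, pow_one] at h1 h2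
      simp only [Pi.sub_apply, Pi.add_apply, Pi.smul_apply, smul_eq_mul]
      linarith
    have b1 : norm3 (v + w) ≤ 2 * (α 0 0 + α 1 1) := by
      rw [hvw]
      calc norm3 ((2:ℝ) • μ 0 0 + (-2:ℝ) • μ 1 1)
          ≤ norm3 ((2:ℝ) • μ 0 0) + norm3 ((-2:ℝ) • μ 1 1) := norm3_add_le _ _
        _ = 2 * norm3 (μ 0 0) + 2 * norm3 (μ 1 1) := by
            rw [norm3_smul, norm3_smul]; norm_num
        _ ≤ 2 * (α 0 0 + α 1 1) := by
            have := hle 0 0; have := hle 1 1; linarith [hle 0 0, hle 1 1]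
    have b2 : norm3 (v - w) ≤ 2 * (α 0 1 + α 1 0) := by
      rw [hvmw]
      calc norm3 ((2:ℝ) • μ 0 1 + (-2:ℝ) • μ 1 0)
          ≤ norm3 ((2:ℝ) • μ 0 1) + norm3 ((-2:ℝ) • μ 1 0) := norm3_add_le _ _
        _ = 2 * norm3 (μ 0 1) + 2 * norm3 (μ 1 0) := by
            rw [norm3_smul, norm3_smul]; norm_num
        _ ≤ 2 * (α 0 1 + α 1 0) := by linarith [hle 0 1, hle 1 0]
    have s1 := (keyA 0).1
    have s2 := (keyA 1).1
    linarith
  · intro h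
    set t : ℝ := (norm3 (v + w) - norm3 (v - w)) / 2 with ht
    refine ⟨fun i f => Jmat ((1 + (-1:ℝ)^((i:ℕ)+(f:ℕ)) * t)/4)
      (((-1:ℝ)^(i:ℕ)/4) • v + ((-1:ℝ)^(f:ℕ)/4) • w), ?_, ?_, ?_⟩
    · intro i f
      apply jmat_posSemidef
      have hn1 : 0 ≤ norm3 (v + w) := norm3_nonneg _
      have hn2 : 0 ≤ norm3 (v - w) := norm3_nonneg _
      fin_cases i <;> fin_cases f <;>
        simp only [Fin.zero_eta, Fin.mk_one, Fin.isValue, Fin.val_zero, Fin.val_one]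
      · have e : ((-1:ℝ)^(0:ℕ)/4) • v + ((-1:ℝ)^(0:ℕ)/4) • w = ((1:ℝ)/4) • (v + w) := by
          funext k; simp only [Pi.add_apply, Pi.smul_apply, smul_eq_mul]; ring
        rw [e, norm3_smul, abs_of_nonneg (by norm_num : (0:ℝ) ≤ (1:ℝ)/4)]
        norm_num
        linarith
      · have e : ((-1:ℝ)^(0:ℕ)/4) • v + ((-1:ℝ)^(1:ℕ)/4) • w = ((1:ℝ)/4) • (v - w) := by
          funext k; simp only [Pi.add_apply, Pi.sub_apply, Pi.smul_apply, smul_eq_mul]; ring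
        rw [e, norm3_smul, abs_of_nonneg (by norm_num : (0:ℝ) ≤ (1:ℝ)/4)]
        norm_num
        linarith
      · have e : ((-1:ℝ)^(1:ℕ)/4) • v + ((-1:ℝ)^(0:ℕ)/4) • w = (-(1:ℝ)/4) • (v - w) := by
          funext k; simp only [Pi.add_apply, Pi.sub_apply, Pi.smul_apply, smul_eq_mul]; ring
        rw [e, norm3_smul, abs_of_nonpos (by norm_num : (-(1:ℝ)/4) ≤ 0)]
        norm_num
        linarith
      · have e : ((-1:ℝ)^(1:ℕ)/4) • v + ((-1:ℝ)^(1:ℕ)/4) • w = (-(1:ℝ)/4) • (v + w) := by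
          funext k; simp only [Pi.add_apply, Pi.smul_apply, smul_eq_mul]; ring
        rw [e, norm3_smul, abs_of_nonpos (by norm_num : (-(1:ℝ)/4) ≤ 0)]
        norm_num
        linarith
    · intro i
      rw [Fin.sum_univ_two, Jmat_add, hA i, A_eq]
      apply Jmat_congr
      · fin_cases i <;>
          simp only [Fin.zero_eta, Fin.mk_one, Fin.isValue, Fin.val_zero, Fin.val_one,
            pow_zero, pow_one, pow_add] <;> ring
      · intro k
        fin_cases i <;>
          simp only [Fin.zero_eta, Fin.mk_one, Fin.isValue, Fin.val_zero, Fin.val_one,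
            pow_zero, pow_one, Pi.add_apply, Pi.smul_apply, smul_eq_mul] <;> ring
    · intro f
      rw [Fin.sum_univ_two, Jmat_add, hB f, A_eq]
      apply Jmat_congr
      · fin_cases f <;>
          simp only [Fin.zero_eta, Fin.mk_one, Fin.isValue, Fin.val_zero, Fin.val_one,
            pow_zero, pow_one, pow_add] <;> ring
      · intro k
        fin_cases f <;>
          simp only [Fin.zero_eta, Fin.mk_one, Fin.isValue, Fin.val_zero, Fin.val_one,
            pow_zero, pow_one, Pi.add_apply, Pi.smul_apply, smul_eq_mul] <;> ring
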